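/- For every t ∈ ℝ and every (u,v,w) ∈ ℝ³ with w ≠ 0, the map exp^{(t)} : ℝ³ → ℝ³ is differentiable at (u,v,w) and the determinant of its derivative there equals 4t(u² − v²) · (sinh(wt/2)/w) · ((wt/2)·cosh(wt/2) − sinh(wt/2))/w³. -/

import Mathlib

open Real

/-- The sub-Lorentzian exponential map of the Heisenberg group at time `t`. -/
noncomputable def heisExp (t : ℝ) (p : ℝ × ℝ × ℝ) : ℝ × ℝ × ℝ :=
  if p.2.2 = 0 then (p.1 * t, p.2.1 * t, 0)
  else
    ((p.2.1 * (Real.cosh (p.2.2 * t) - 1) + p.1 * Real.sinh (p.2.2 * t)) / p.2.2,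
     (p.2.1 * Real.sinh (p.2.2 * t) + p.1 * (Real.cosh (p.2.2 * t) - 1)) / p.2.2,
     ((p.1^2 - p.2.1^2) / 2) * ((Real.sinh (p.2.2 * t) - p.2.2 * t) / p.2.2^2))

noncomputable def e3 : (ℝ × ℝ × ℝ) ≃ₗ[ℝ] (Fin 3 → ℝ) where
  toFun p := ![p.1, p.2.1, p.2.2]
  invFun f := (f 0, f 1, f 2)
  map_add' p q := by funext i; fin_cases i <;> simp
  map_smul' c p := by funext i; fin_cases i <;> simp
  left_inv p := by simp
  right_inv f := by funext i; fin_cases i <;> simp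

noncomputable def B3 : Module.Basis (Fin 3) ℝ (ℝ × ℝ × ℝ) := Module.Basis.ofEquivFun e3

noncomputable def heisExpS (t : ℝ) (p : ℝ × ℝ × ℝ) : ℝ × ℝ × ℝ :=
    ((p.2.1 * (Real.cosh (p.2.2 * t) - 1) + p.1 * Real.sinh (p.2.2 * t)) * (p.2.2)⁻¹,
     (p.2.1 * Real.sinh (p.2.2 * t) + p.1 * (Real.cosh (p.2.2 * t) - 1)) * (p.2.2)⁻¹,
     (p.1 * p.1 - p.2.1 * p.2.1) * (2:ℝ)⁻¹ * ((Real.sinh (p.2.2 * t) - p.2.2 * t) * (p.2.2 * p.2.2)⁻¹))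

set_option maxHeartbeats 2000000 in
/-- for `w ≠ 0`, the map `exp^{(t)}` is differentiable at `(u,v,w)`
and the determinant of its derivative there equals
`4t(u² − v²)·(sinh(wt/2)/w)·((wt/2)cosh(wt/2) − sinh(wt/2))/w³`. -/
theorem heisExp_jacobian (t u v w : ℝ) (hw : w ≠ 0) :
    DifferentiableAt ℝ (heisExp t) (u, v, w) ∧
    (fderiv ℝ (heisExp t) (u, v, w)).det =
      4 * t * (u^2 - v^2) * (Real.sinh (w * t / 2) / w) *
        (((w * t / 2) * Real.cosh (w * t / 2) - Real.sinh (w * t / 2)) / w^3) := by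
  set p0 : ℝ × ℝ × ℝ := (u, v, w) with hp0
  have hu : HasFDerivAt (fun p : ℝ×ℝ×ℝ => p.1) (ContinuousLinearMap.fst ℝ ℝ (ℝ×ℝ)) p0 := hasFDerivAt_fst
  have hv : HasFDerivAt (fun p : ℝ×ℝ×ℝ => p.2.1)
      ((ContinuousLinearMap.fst ℝ ℝ ℝ).comp (ContinuousLinearMap.snd ℝ ℝ (ℝ×ℝ))) p0 :=
    hasFDerivAt_fst.comp p0 hasFDerivAt_snd
  have hw3 : HasFDerivAt (fun p : ℝ×ℝ×ℝ => p.2.2)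
      ((ContinuousLinearMap.snd ℝ ℝ ℝ).comp (ContinuousLinearMap.snd ℝ ℝ (ℝ×ℝ))) p0 :=
    hasFDerivAt_snd.comp p0 hasFDerivAt_snd
  have hwt := hw3.mul_const t
  have hs := (Real.hasDerivAt_sinh (w*t)).comp_hasFDerivAt p0 hwt
  have hc := (Real.hasDerivAt_cosh (w*t)).comp_hasFDerivAt p0 hwt
  have hinv := (hasDerivAt_inv hw).comp_hasFDerivAt p0 hw3
  have hinv2 := (hasDerivAt_inv (mul_ne_zero hw hw)).comp_hasFDerivAt p0 (hw3.mul hw3)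
  have h1 := ((hv.mul (hc.sub_const 1)).add (hu.mul hs)).mul hinv
  have h2 := ((hv.mul hs).add (hu.mul (hc.sub_const 1))).mul hinv
  have h3 := (((hu.mul hu).sub (hv.mul hv)).mul_const ((2:ℝ)⁻¹)).mul ((hs.sub hwt).mul hinv2)
  have H : HasFDerivAt (heisExpS t) _ p0 := h1.prodMk (h2.prodMk h3)
  have hne : ∀ᶠ p : ℝ×ℝ×ℝ in nhds p0, p.2.2 ≠ 0 := by
    have : Continuous (fun p : ℝ×ℝ×ℝ => p.2.2) := continuous_snd.snd
    exact this.continuousAt.eventually_ne hw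
  have hev : heisExp t =ᶠ[nhds p0] heisExpS t := by
    filter_upwards [hne] with p hp
    simp only [heisExp, heisExpS, if_neg hp]
    refine Prod.ext ?_ (Prod.ext ?_ ?_) <;> field_simp <;> ring
  have H2 := H.congr_of_eventuallyEq hev
  refine ⟨H2.differentiableAt, ?_⟩
  rw [H2.fderiv]
  rw [ContinuousLinearMap.det, ← LinearMap.det_toMatrix B3, Matrix.det_fin_three]
  simp only [LinearMap.toMatrix_apply, B3, Module.Basis.ofEquivFun_repr_apply, Module.Basis.coe_ofEquivFun,
    ContinuousLinearMap.coe_coe, ContinuousLinearMap.prod_apply, ContinuousLinearMap.add_apply,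
    ContinuousLinearMap.coe_smul', Pi.smul_apply, ContinuousLinearMap.smulRight_apply,
    ContinuousLinearMap.comp_apply, ContinuousLinearMap.coe_fst', ContinuousLinearMap.coe_snd',
    ContinuousLinearMap.smul_apply, ContinuousLinearMap.neg_apply, ContinuousLinearMap.sub_apply,
    e3, LinearEquiv.coe_mk, LinearEquiv.coe_symm_mk]
  simp only [Function.comp_apply, Matrix.cons_val_zero, Matrix.cons_val_one, Matrix.head_cons,
    Matrix.cons_val_two, Matrix.tail_cons, Pi.single_apply, smul_eq_mul, hp0]
  norm_num [Fin.ext_iff]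
  simp only [Matrix.cons_val_two, Matrix.tail_cons, Matrix.head_cons]
  have h2 : w * t = 2 * (w*t/2) := by ring
  rw [h2, Real.sinh_two_mul, Real.cosh_two_mul]
  have hC := Real.cosh_sq (w*t/2)
  field_simp
  linear_combination ((-4)*(Real.sinh (w * t / 2))^2*(u)^2*(w)^1*(t)^1 + (1)*(Real.sinh (w * t / 2))^4*(u)^2*(w)^1*(t)^1 + (4)*(Real.sinh (w * t / 2))^2*(v)^2*(w)^1*(t)^1 + (-1)*(Real.sinh (w * t / 2))^4*(v)^2*(w)^1*(t)^1 + (2)*(Real.cosh (w * t / 2))^2*(u)^2*(w)^1*(t)^1 + (-1)*(Real.cosh (w * t / 2))^4*(u)^2*(w)^1*(t)^1 + (-2)*(Real.cosh (w * t / 2))^2*(v)^2*(w)^1*(t)^1 + (1)*(Real.cosh (w * t / 2))^4*(v)^2*(w)^1*(t)^1 + (-1)*(u)^2*(w)^1*(t)^1 + (1)*(v)^2*(w)^1*(t)^1) * hC
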